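/- For every n ≥ 2, B_n^{(1,0,1,0)}(x) = Σ_{1 ≤ i < j ≤ n} [ (n−2)! / ((i−1)!·(j−i−1)!·(n−j)!) ] · (j−i−1)! · x^{j−i−1} · R_{i−1}^{(0,0,1,0)}(x) · R_{n−j}^{(1,0,0,0)}(x), where R_0^{(0,0,1,0)}(x) = R_0^{(1,0,0,0)}(x) = 1. -/

import Mathlib

open Finset Polynomial Equiv


/-- Number of points in quadrant I relative to `(i, σ i)`. -/
def quad1 {n : ℕ} (σ : Equiv.Perm (Fin n)) (i : Fin n) : ℕ :=
  (Finset.univ.filter (fun j => i < j ∧ σ i < σ j)).card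

/-- Number of points in quadrant III relative to `(i, σ i)`. -/
def quad3 {n : ℕ} (σ : Equiv.Perm (Fin n)) (i : Fin n) : ℕ :=
  (Finset.univ.filter (fun j => j < i ∧ σ j < σ i)).card

/-- `mmp^{(1,0,1,0)}(σ)`. -/
def mmp1010 {n : ℕ} (σ : Equiv.Perm (Fin n)) : ℕ :=
  (Finset.univ.filter (fun i => 1 ≤ quad1 σ i ∧ 1 ≤ quad3 σ i)).card

/-- `mmp^{(0,0,1,0)}(σ)`: indices with at least 1 point in quadrant III. -/
def mmp0010 {n : ℕ} (σ : Equiv.Perm (Fin n)) : ℕ :=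
  (Finset.univ.filter (fun i => 1 ≤ quad3 σ i)).card

/-- `mmp^{(1,0,0,0)}(σ)`: indices with at least 1 point in quadrant I. -/
def mmp1000 {n : ℕ} (σ : Equiv.Perm (Fin n)) : ℕ :=
  (Finset.univ.filter (fun i => 1 ≤ quad1 σ i)).card

/-- `R_n^{(0,0,1,0)}(x)`. -/
noncomputable def R0010 (n : ℕ) : Polynomial ℤ :=
  ∑ σ : Equiv.Perm (Fin n), Polynomial.X ^ mmp0010 σ

/-- `R_n^{(1,0,0,0)}(x)`. -/
noncomputable def R1000 (n : ℕ) : Polynomial ℤ :=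
  ∑ σ : Equiv.Perm (Fin n), Polynomial.X ^ mmp1000 σ

namespace Aux

lemma quad3_pos_iff {n : ℕ} (σ : Equiv.Perm (Fin n)) (i : Fin n) :
    1 ≤ quad3 σ i ↔ ∃ j, j < i ∧ σ j < σ i := by
  unfold quad3
  rw [Nat.one_le_iff_ne_zero, ← Nat.pos_iff_ne_zero, Finset.card_pos,
    Finset.filter_nonempty_iff]
  simp

lemma quad1_pos_iff {n : ℕ} (σ : Equiv.Perm (Fin n)) (i : Fin n) :
    1 ≤ quad1 σ i ↔ ∃ j, i < j ∧ σ i < σ j := by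
  unfold quad1
  rw [Nat.one_le_iff_ne_zero, ← Nat.pos_iff_ne_zero, Finset.card_pos,
    Finset.filter_nonempty_iff]
  simp

section Std

variable {m k : ℕ}

def stdN (e : Fin k → Fin m) (τ : Equiv.Perm (Fin m)) (x : Fin k) : ℕ :=
  (Finset.univ.filter fun l : Fin k => τ (e l) < τ (e x)).card

lemma stdN_lt (e : Fin k → Fin m) (τ : Equiv.Perm (Fin m)) (x : Fin k) :
    stdN e τ x < k := by
  have hsub : (Finset.univ.filter fun l : Fin k => τ (e l) < τ (e x)) ⊆
      Finset.univ.erase x := by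
    intro l hl
    simp only [Finset.mem_filter] at hl
    refine Finset.mem_erase.2 ⟨?_, Finset.mem_univ _⟩
    rintro rfl; exact lt_irrefl _ hl.2
  calc stdN e τ x ≤ (Finset.univ.erase x).card := Finset.card_le_card hsub
    _ < Finset.univ.card := Finset.card_erase_lt_of_mem (Finset.mem_univ x)
    _ = k := by simp

lemma stdN_mono (e : Fin k → Fin m) (τ : Equiv.Perm (Fin m)) {u v : Fin k}
    (h : τ (e u) < τ (e v)) : stdN e τ u < stdN e τ v := by
  apply Finset.card_lt_card
  constructor
  · intro w hw
    simp only [Finset.mem_filter] at hw ⊢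
    exact ⟨hw.1, hw.2.trans h⟩
  · intro hsub
    have hu : u ∈ Finset.univ.filter fun l : Fin k => τ (e l) < τ (e v) := by
      simp [h]
    have := hsub hu
    simp at this

lemma stdN_lt_iff (e : Fin k → Fin m) (he : Function.Injective e)
    (τ : Equiv.Perm (Fin m)) (l x : Fin k) :
    stdN e τ l < stdN e τ x ↔ τ (e l) < τ (e x) := by
  constructor
  · intro h
    rcases lt_trichotomy (τ (e l)) (τ (e x)) with h' | h' | h'
    · exact h'
    · have : l = x := he (τ.injective h')
      subst this; exact absurd h (lt_irrefl _)
    · exact absurd h (not_lt.2 (le_of_lt (stdN_mono e τ h')))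
  · exact stdN_mono e τ

noncomputable def std (e : Fin k → Fin m) (he : Function.Injective e) (τ : Equiv.Perm (Fin m)) :
    Equiv.Perm (Fin k) :=
  Equiv.ofBijective (fun x => (⟨stdN e τ x, stdN_lt e τ x⟩ : Fin k))
    (Finite.injective_iff_bijective.mp (by
      intro u v huv
      simp only [Fin.mk.injEq] at huv
      by_contra hne
      rcases lt_trichotomy (τ (e u)) (τ (e v)) with h | h | h
      · have := stdN_mono e τ h; omega
      · exact hne (he (τ.injective h))
      · have := stdN_mono e τ h; omega))

lemma std_lt_iff (e : Fin k → Fin m) (he : Function.Injective e)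
    (τ : Equiv.Perm (Fin m)) (l x : Fin k) :
    std e he τ l < std e he τ x ↔ τ (e l) < τ (e x) := by
  rw [← stdN_lt_iff e he τ l x]
  rfl

lemma card_filter_comp_perm (π : Equiv.Perm (Fin k)) (Q : Fin k → Prop)
    [DecidablePred Q] :
    (Finset.univ.filter fun l => Q (π l)).card = (Finset.univ.filter Q).card := by
  apply Finset.card_nbij (i := π)
  · intro x hx; simp only [Finset.mem_coe, Finset.mem_filter] at hx ⊢; exact ⟨Finset.mem_univ _, hx.2⟩
  · intro x _ y _ h; exact π.injective h
  · intro y hy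
    simp only [Finset.coe_filter, Set.mem_setOf_eq] at hy ⊢
    exact ⟨π.symm y, by simp [hy.2], by simp⟩

lemma std_mul (e : Fin k → Fin m) (he : Function.Injective e)
    (τ P : Equiv.Perm (Fin m)) (π : Equiv.Perm (Fin k))
    (hP : ∀ l, P (e l) = e (π l)) :
    std e he (τ * P) = std e he τ * π := by
  apply Equiv.ext
  intro x
  have : stdN e (τ * P) x = stdN e τ (π x) := by
    unfold stdN
    have hfe : (Finset.univ.filter fun l : Fin k => (τ * P) (e l) < (τ * P) (e x)) =
        (Finset.univ.filter fun l : Fin k => τ (e (π l)) < τ (e (π x))) := by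
      apply Finset.filter_congr
      intro l _
      simp [Equiv.Perm.mul_apply, hP]
    rw [hfe]
    exact card_filter_comp_perm π (fun l => τ (e l) < τ (e (π x)))
  simpa [std, Fin.ext_iff] using this

end Std


section Core

variable {m a c : ℕ}

def eA (ha : a ≤ m) (x : Fin a) : Fin m := ⟨x.val, lt_of_lt_of_le x.isLt ha⟩

def eC (hc : c ≤ m) (x : Fin c) : Fin m := ⟨m - c + x.val, by omega⟩

lemma eA_inj (ha : a ≤ m) : Function.Injective (eA ha) := by
  intro x y h
  simpa [eA, Fin.ext_iff] using h

lemma eC_inj (hc : c ≤ m) : Function.Injective (eC hc) := by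
  intro x y h
  simp only [eC, Fin.ext_iff] at h ⊢
  omega

def equivA (ha : a ≤ m) : Fin a ≃ {y : Fin m // y.val < a} where
  toFun x := ⟨eA ha x, x.isLt⟩
  invFun y := ⟨y.1.val, y.2⟩
  left_inv x := rfl
  right_inv y := rfl

def equivC (hc : c ≤ m) : Fin c ≃ {y : Fin m // m - c ≤ y.val} where
  toFun x := ⟨eC hc x, Nat.le_add_right _ _⟩
  invFun y := ⟨y.1.val - (m - c), by have := y.1.isLt; have := y.2; omega⟩
  left_inv x := by
    ext
    simp [eC]
  right_inv y := by
    have := y.2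
    apply Subtype.ext
    apply Fin.ext
    simp only [eC]
    omega

noncomputable def extA (ha : a ≤ m) (π : Equiv.Perm (Fin a)) : Equiv.Perm (Fin m) :=
  π.extendDomain (equivA ha)

noncomputable def extC (hc : c ≤ m) (π : Equiv.Perm (Fin c)) : Equiv.Perm (Fin m) :=
  π.extendDomain (equivC hc)

lemma extA_apply (ha : a ≤ m) (π : Equiv.Perm (Fin a)) (l : Fin a) :
    extA ha π (eA ha l) = eA ha (π l) :=
  π.extendDomain_apply_image (equivA ha) l

lemma extA_fix (ha : a ≤ m) (π : Equiv.Perm (Fin a)) (x : Fin m) (h : ¬ x.val < a) :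
    extA ha π x = x :=
  π.extendDomain_apply_not_subtype (equivA ha) h

lemma extC_apply (hc : c ≤ m) (π : Equiv.Perm (Fin c)) (l : Fin c) :
    extC hc π (eC hc l) = eC hc (π l) :=
  π.extendDomain_apply_image (equivC hc) l

lemma extC_fix (hc : c ≤ m) (π : Equiv.Perm (Fin c)) (x : Fin m) (h : ¬ m - c ≤ x.val) :
    extC hc π x = x :=
  π.extendDomain_apply_not_subtype (equivC hc) h

variable (hac : a + c ≤ m)

noncomputable def blk (π₁ : Equiv.Perm (Fin a)) (π₂ : Equiv.Perm (Fin c)) :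
    Equiv.Perm (Fin m) :=
  extA (by omega) π₁ * extC (by omega) π₂

lemma blk_eA (π₁ : Equiv.Perm (Fin a)) (π₂ : Equiv.Perm (Fin c)) (l : Fin a) :
    blk hac π₁ π₂ (eA (by omega) l) = eA (by omega) (π₁ l) := by
  unfold blk
  rw [Equiv.Perm.mul_apply, extC_fix, extA_apply]
  simp only [eA]
  have := l.isLt
  omega

lemma blk_eC (π₁ : Equiv.Perm (Fin a)) (π₂ : Equiv.Perm (Fin c)) (l : Fin c) :
    blk hac π₁ π₂ (eC (by omega) l) = eC (by omega) (π₂ l) := by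
  unfold blk
  rw [Equiv.Perm.mul_apply, extC_apply, extA_fix]
  simp only [eC]
  omega

lemma blk_fix (π₁ : Equiv.Perm (Fin a)) (π₂ : Equiv.Perm (Fin c)) (x : Fin m)
    (h1 : ¬ x.val < a) (h2 : ¬ m - c ≤ x.val) : blk hac π₁ π₂ x = x := by
  unfold blk
  rw [Equiv.Perm.mul_apply, extC_fix _ _ _ h2, extA_fix _ _ _ h1]

lemma blk_mul (π₁ α : Equiv.Perm (Fin a)) (π₂ β : Equiv.Perm (Fin c)) :
    blk hac π₁ π₂ * blk hac α β = blk hac (π₁ * α) (π₂ * β) := by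
  apply Equiv.ext
  intro x
  rw [Equiv.Perm.mul_apply]
  by_cases hA : x.val < a
  · have hx : x = eA (show a ≤ m by omega) ⟨x.val, hA⟩ := rfl
    rw [hx, blk_eA hac, blk_eA hac, blk_eA hac, Equiv.Perm.mul_apply]
  · by_cases hC : m - c ≤ x.val
    · have hx : x = eC (show c ≤ m by omega) ⟨x.val - (m - c), by omega⟩ := by
        apply Fin.ext
        simp only [eC]
        omega
      rw [hx, blk_eC hac, blk_eC hac, blk_eC hac, Equiv.Perm.mul_apply]
    · rw [blk_fix hac _ _ _ hA hC, blk_fix hac _ _ _ hA hC, blk_fix hac _ _ _ hA hC]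

lemma blk_one : blk hac (1 : Equiv.Perm (Fin a)) (1 : Equiv.Perm (Fin c)) = 1 := by
  apply Equiv.ext
  intro x
  by_cases hA : x.val < a
  · have hx : x = eA (show a ≤ m by omega) ⟨x.val, hA⟩ := rfl
    rw [hx, blk_eA hac]
    rfl
  · by_cases hC : m - c ≤ x.val
    · have hx : x = eC (show c ≤ m by omega) ⟨x.val - (m - c), by omega⟩ := by
        apply Fin.ext
        simp only [eC]
        omega
      rw [hx, blk_eC hac]
      rfl
    · rw [blk_fix hac _ _ _ hA hC]
      rfl

noncomputable def stPair (τ : Equiv.Perm (Fin m)) :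
    Equiv.Perm (Fin a) × Equiv.Perm (Fin c) :=
  (std (eA (show a ≤ m by omega)) (eA_inj _) τ,
   std (eC (show c ≤ m by omega)) (eC_inj _) τ)

lemma st_mul (τ : Equiv.Perm (Fin m)) (π₁ : Equiv.Perm (Fin a)) (π₂ : Equiv.Perm (Fin c)) :
    stPair hac (τ * blk hac π₁ π₂) = ((stPair hac τ).1 * π₁, (stPair hac τ).2 * π₂) := by
  have h1 := std_mul (eA (show a ≤ m by omega)) (eA_inj _) τ (blk hac π₁ π₂) π₁ (blk_eA hac π₁ π₂)
  have h2 := std_mul (eC (show c ≤ m by omega)) (eC_inj _) τ (blk hac π₁ π₂) π₂ (blk_eC hac π₁ π₂)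
  unfold stPair
  rw [h1, h2]

def statA (a : ℕ) {m : ℕ} (τ : Equiv.Perm (Fin m)) : ℕ :=
  (Finset.univ.filter fun x : Fin m => x.val < a ∧ ∃ l, l < x ∧ τ l < τ x).card

def statB (s : ℕ) {m : ℕ} (τ : Equiv.Perm (Fin m)) : ℕ :=
  (Finset.univ.filter fun x : Fin m => s ≤ x.val ∧ ∃ l, x < l ∧ τ x < τ l).card

lemma statA_eq (τ : Equiv.Perm (Fin m)) : statA a τ = mmp0010 (stPair hac τ).1 := by
  have ha : a ≤ m := by omega
  unfold statA mmp0010 stPair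
  symm
  apply Finset.card_nbij (i := eA ha)
  · intro x hx
    simp only [Finset.mem_coe, Finset.mem_filter, Finset.mem_univ, true_and] at hx ⊢
    rw [quad3_pos_iff] at hx
    obtain ⟨l, hl, hlt⟩ := hx
    rw [std_lt_iff] at hlt
    exact ⟨x.isLt, eA ha l, hl, hlt⟩
  · intro x _ y _ h
    exact eA_inj ha h
  · intro y hy
    simp only [Finset.coe_filter, Set.mem_setOf_eq, Finset.mem_univ, true_and] at hy ⊢
    obtain ⟨hya, l, hl, hlt⟩ := hy
    refine ⟨⟨y.val, hya⟩, ?_, rfl⟩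
    simp only [Set.mem_setOf_eq]
    rw [quad3_pos_iff]
    have hla : l.val < a := lt_trans hl hya
    refine ⟨⟨l.val, hla⟩, hl, ?_⟩
    rw [std_lt_iff]
    exact hlt

lemma statB_eq (τ : Equiv.Perm (Fin m)) : statB (m - c) τ = mmp1000 (stPair hac τ).2 := by
  have hc : c ≤ m := by omega
  unfold statB mmp1000 stPair
  symm
  apply Finset.card_nbij (i := eC hc)
  · intro x hx
    simp only [Finset.mem_coe, Finset.mem_filter, Finset.mem_univ, true_and] at hx ⊢
    rw [quad1_pos_iff] at hx
    obtain ⟨l, hl, hlt⟩ := hx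
    rw [std_lt_iff] at hlt
    refine ⟨Nat.le_add_right _ _, eC hc l, ?_, hlt⟩
    have hlv : (x : ℕ) < (l : ℕ) := hl
    simp only [eC, Fin.lt_def]
    omega
  · intro x _ y _ h
    exact eC_inj hc h
  · intro y hy
    simp only [Finset.coe_filter, Set.mem_setOf_eq, Finset.mem_univ, true_and] at hy ⊢
    obtain ⟨hyc, l, hl, hlt⟩ := hy
    have hyl : y.val - (m - c) < c := by have := y.isLt; omega
    refine ⟨⟨y.val - (m - c), hyl⟩, ?_, ?_⟩
    · simp only [Set.mem_setOf_eq]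
      rw [quad1_pos_iff]
      have hlval : m - c ≤ l.val := le_trans hyc (le_of_lt hl)
      have hlc : l.val - (m - c) < c := by have := l.isLt; omega
      refine ⟨⟨l.val - (m - c), hlc⟩, by rw [Fin.lt_def]; simp only []; omega, ?_⟩
      rw [std_lt_iff]
      have h1 : eC hc ⟨y.val - (m - c), hyl⟩ = y := by
        apply Fin.ext; simp only [eC]; omega
      have h2 : eC hc ⟨l.val - (m - c), hlc⟩ = l := by
        apply Fin.ext; simp only [eC]; omega
      rw [h1, h2]
      exact hlt
    · apply Fin.ext; simp only [eC]; omega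

lemma fiber_card (g : Equiv.Perm (Fin a) × Equiv.Perm (Fin c)) :
    (Finset.univ.filter fun τ : Equiv.Perm (Fin m) => stPair hac τ = g).card =
    (Finset.univ.filter fun τ : Equiv.Perm (Fin m) => stPair hac τ = 1).card := by
  apply Finset.card_nbij' (i := fun τ => τ * blk hac g.1⁻¹ g.2⁻¹)
    (j := fun τ => τ * blk hac g.1 g.2)
  · intro τ hτ
    simp only [Finset.mem_coe, Finset.mem_filter, Finset.mem_univ, true_and] at hτ ⊢
    rw [st_mul, hτ]
    simp [Prod.ext_iff]
  · intro τ hτ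
    simp only [Finset.mem_coe, Finset.mem_filter, Finset.mem_univ, true_and] at hτ ⊢
    rw [st_mul, hτ]
    simp [Prod.ext_iff]
  · intro τ _
    beta_reduce; rw [mul_assoc, blk_mul]
    simp [blk_one hac]
  · intro τ _
    beta_reduce; rw [mul_assoc, blk_mul]
    simp [blk_one hac]

lemma total :
    Nat.factorial m = (Nat.factorial a * Nat.factorial c) *
      (Finset.univ.filter fun τ : Equiv.Perm (Fin m) => stPair hac τ = 1).card := by
  have h1 : (Finset.univ : Finset (Equiv.Perm (Fin m))).card =
      ∑ g : Equiv.Perm (Fin a) × Equiv.Perm (Fin c),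
        (Finset.univ.filter fun τ => stPair hac τ = g).card :=
    Finset.card_eq_sum_card_fiberwise (fun τ _ => Finset.mem_univ _)
  rw [Finset.card_univ, Fintype.card_perm, Fintype.card_fin] at h1
  rw [h1, Finset.sum_congr rfl (fun g _ => fiber_card hac g), Finset.sum_const, smul_eq_mul]
  congr 1
  rw [Finset.card_univ, Fintype.card_prod, Fintype.card_perm, Fintype.card_perm,
    Fintype.card_fin, Fintype.card_fin]

omit hac in
lemma core_sum (hac : a + c ≤ m) :
    ∑ τ : Equiv.Perm (Fin m), (X : Polynomial ℤ) ^ (statA a τ + statB (m - c) τ) =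
      (Nat.factorial m / (Nat.factorial a * Nat.factorial c)) • (R0010 a * R1000 c) := by
  have hM : Nat.factorial m / (Nat.factorial a * Nat.factorial c) =
      (Finset.univ.filter fun τ : Equiv.Perm (Fin m) => stPair hac τ = 1).card := by
    rw [total hac, Nat.mul_div_cancel_left]
    positivity
  rw [← Finset.sum_fiberwise_of_maps_to (g := stPair hac) (t := Finset.univ)
    (fun τ _ => Finset.mem_univ _)]
  have step1 : ∀ g : Equiv.Perm (Fin a) × Equiv.Perm (Fin c),
      (∑ τ ∈ Finset.univ.filter (fun τ : Equiv.Perm (Fin m) => stPair hac τ = g),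
        (X : Polynomial ℤ) ^ (statA a τ + statB (m - c) τ)) =
      (Finset.univ.filter fun τ : Equiv.Perm (Fin m) => stPair hac τ = 1).card •
        ((X : Polynomial ℤ) ^ mmp0010 g.1 * X ^ mmp1000 g.2) := by
    intro g
    have hcg : ∀ τ ∈ Finset.univ.filter (fun τ : Equiv.Perm (Fin m) => stPair hac τ = g),
        (X : Polynomial ℤ) ^ (statA a τ + statB (m - c) τ)
          = X ^ mmp0010 g.1 * X ^ mmp1000 g.2 := by
      intro τ hτ
      simp only [Finset.mem_filter] at hτ
      rw [statA_eq hac, statB_eq hac, ← hτ.2, pow_add]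
    rw [Finset.sum_congr rfl hcg, Finset.sum_const, fiber_card hac g]
  rw [Finset.sum_congr rfl (fun g _ => step1 g), ← Finset.smul_sum, hM]
  congr 1
  rw [R0010, R1000, Finset.sum_mul_sum]
  rw [Fintype.sum_prod_type]

end Core

section Outer

variable {m : ℕ} (p q : Fin (m + 2))

def Emap (k : Fin m) : Fin (m + 2) :=
  ⟨if k.val < p.val then k.val else if k.val + 1 < q.val then k.val + 1 else k.val + 2,
   by have := k.isLt; split_ifs <;> omega⟩

lemma Emap_val (k : Fin m) : (Emap p q k).val =
    if k.val < p.val then k.val else if k.val + 1 < q.val then k.val + 1 else k.val + 2 := rfl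

lemma Emap_strictMono : StrictMono (Emap p q) := by
  intro k l hkl
  have hk := k.isLt
  have hl := l.isLt
  have hkl' : k.val < l.val := hkl
  rw [Fin.lt_def, Emap_val, Emap_val]
  split_ifs <;> omega

lemma Emap_ne_p (hpq : p < q) (k : Fin m) : Emap p q k ≠ p := by
  have hpq' : p.val < q.val := hpq
  intro h
  have := congrArg Fin.val h
  rw [Emap_val] at this
  split_ifs at this <;> omega

lemma Emap_ne_q (hpq : p < q) (k : Fin m) : Emap p q k ≠ q := by
  have hpq' : p.val < q.val := hpq
  intro h
  have := congrArg Fin.val h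
  rw [Emap_val] at this
  split_ifs at this <;> omega

lemma Emap_surj (hpq : p < q) (x : Fin (m + 2)) (hxp : x ≠ p) (hxq : x ≠ q) :
    ∃ k : Fin m, Emap p q k = x := by
  have hpq' : p.val < q.val := hpq
  have hx := x.isLt
  have hq := q.isLt
  have hxp' : x.val ≠ p.val := fun h => hxp (Fin.ext h)
  have hxq' : x.val ≠ q.val := fun h => hxq (Fin.ext h)
  by_cases h1 : x.val < p.val
  · exact ⟨⟨x.val, by omega⟩, by apply Fin.ext; rw [Emap_val]; dsimp only; split_ifs <;> omega⟩
  · by_cases h2 : x.val < q.val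
    · exact ⟨⟨x.val - 1, by omega⟩,
        by apply Fin.ext; rw [Emap_val]; dsimp only; split_ifs <;> omega⟩
    · exact ⟨⟨x.val - 2, by omega⟩,
        by apply Fin.ext; rw [Emap_val]; dsimp only; split_ifs <;> omega⟩

def gp (z : Fin m ⊕ Fin 2) : Fin (m + 2) :=
  Sum.elim (Emap p q) (fun v => if v.val = 0 then p else q) z

lemma gp_inj (hpq : p < q) : Function.Injective (gp p q) := by
  have hpq' : p.val < q.val := hpq
  intro z w h
  rcases z with k | v <;> rcases w with l | w
  · exact congrArg Sum.inl ((Emap_strictMono p q).injective h)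
  · exfalso
    simp only [gp, Sum.elim_inl, Sum.elim_inr] at h
    split_ifs at h
    · exact Emap_ne_p p q hpq k h
    · exact Emap_ne_q p q hpq k h
  · exfalso
    simp only [gp, Sum.elim_inl, Sum.elim_inr] at h
    split_ifs at h
    · exact Emap_ne_p p q hpq l h.symm
    · exact Emap_ne_q p q hpq l h.symm
  · simp only [gp, Sum.elim_inr] at h
    have hv := v.isLt
    have hw := w.isLt
    congr 1
    apply Fin.ext
    split_ifs at h with h1 h2 h2
    · omega
    · exact absurd (congrArg Fin.val h) (by omega)
    · exact absurd (congrArg Fin.val h) (by omega)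
    · omega

noncomputable def gpE (hpq : p < q) : (Fin m ⊕ Fin 2) ≃ Fin (m + 2) :=
  Equiv.ofBijective (gp p q)
    ((Fintype.bijective_iff_injective_and_card _).2 ⟨gp_inj p q hpq, by simp⟩)

def valF (v : Fin m) : Fin (m + 2) := ⟨v.val + 1, by omega⟩

def gv (z : Fin m ⊕ Fin 2) : Fin (m + 2) :=
  Sum.elim valF (fun v => if v.val = 0 then ⟨0, by omega⟩ else ⟨m + 1, by omega⟩) z

lemma gv_inj : Function.Injective (gv : Fin m ⊕ Fin 2 → Fin (m + 2)) := by
  intro z w h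
  rcases z with k | v <;> rcases w with l | w
  · have hk := k.isLt
    simp only [gv, Sum.elim_inl, valF, Fin.ext_iff] at h
    exact congrArg Sum.inl (Fin.ext (by omega))
  · exfalso
    have hk := k.isLt
    simp only [gv, Sum.elim_inl, Sum.elim_inr, valF] at h
    split_ifs at h <;> simp only [Fin.ext_iff] at h <;> omega
  · exfalso
    have hl := l.isLt
    simp only [gv, Sum.elim_inl, Sum.elim_inr, valF] at h
    split_ifs at h <;> simp only [Fin.ext_iff] at h <;> omega
  · have hv := v.isLt
    have hw := w.isLt
    simp only [gv, Sum.elim_inr] at h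
    congr 1
    apply Fin.ext
    split_ifs at h with h1 h2 h2 <;> simp only [Fin.ext_iff] at h <;> omega

noncomputable def gvE : (Fin m ⊕ Fin 2) ≃ Fin (m + 2) :=
  Equiv.ofBijective gv
    ((Fintype.bijective_iff_injective_and_card _).2 ⟨gv_inj, by simp⟩)

noncomputable def Phi (hpq : p < q) (τ : Equiv.Perm (Fin m)) : Equiv.Perm (Fin (m + 2)) :=
  ((gpE p q hpq).symm.trans ((Equiv.sumCongr τ (Equiv.refl (Fin 2))).trans gvE))

lemma Phi_gp (hpq : p < q) (τ : Equiv.Perm (Fin m)) (z : Fin m ⊕ Fin 2) :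
    Phi p q hpq τ (gp p q z) = gv (Equiv.sumCongr τ (Equiv.refl (Fin 2)) z) := by
  have h1 : gp p q z = gpE p q hpq z := rfl
  simp only [Phi, Equiv.trans_apply, h1, Equiv.symm_apply_apply]
  rfl

lemma Phi_p (hpq : p < q) (τ : Equiv.Perm (Fin m)) :
    Phi p q hpq τ p = ⟨0, by omega⟩ := by
  have := Phi_gp p q hpq τ (Sum.inr 0)
  simpa [gp, gv] using this

lemma Phi_q (hpq : p < q) (τ : Equiv.Perm (Fin m)) :
    Phi p q hpq τ q = ⟨m + 1, by omega⟩ := by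
  have := Phi_gp p q hpq τ (Sum.inr 1)
  simpa [gp, gv] using this

lemma Phi_E (hpq : p < q) (τ : Equiv.Perm (Fin m)) (k : Fin m) :
    Phi p q hpq τ (Emap p q k) = valF (τ k) := by
  have := Phi_gp p q hpq τ (Sum.inl k)
  simpa [gp, gv] using this

lemma valF_lt {u v : Fin m} : valF u < valF v ↔ u < v := by
  rw [Fin.lt_def, Fin.lt_def]
  dsimp only [valF]
  omega

lemma valF_lt_last (u : Fin m) : valF u < (⟨m + 1, by omega⟩ : Fin (m + 2)) := by
  simp only [valF, Fin.lt_def]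
  exact Nat.succ_lt_succ u.isLt

lemma zero_lt_valF (u : Fin m) : (⟨0, by omega⟩ : Fin (m + 2)) < valF u := by
  rw [Fin.lt_def]
  dsimp only [valF]
  omega

lemma cond_region1 (hpq : p < q) (τ : Equiv.Perm (Fin m)) (k : Fin m) (hk : k.val < p.val) :
    ((1 ≤ quad1 (Phi p q hpq τ) (Emap p q k) ∧ 1 ≤ quad3 (Phi p q hpq τ) (Emap p q k)) ↔
      ∃ l, l < k ∧ τ l < τ k) := by
  have hpq' : p.val < q.val := hpq
  have hq := q.isLt
  have hEv : (Emap p q k).val = k.val := by rw [Emap_val]; split_ifs <;> omega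
  rw [quad1_pos_iff, quad3_pos_iff]
  constructor
  · rintro ⟨-, j, hj1, hj2⟩
    have hjv : j.val < k.val := by have := Fin.lt_def.1 hj1; omega
    have hjp : j ≠ p := fun h => by have := congrArg Fin.val h; omega
    have hjq : j ≠ q := fun h => by have := congrArg Fin.val h; omega
    obtain ⟨l, rfl⟩ := Emap_surj p q hpq j hjp hjq
    refine ⟨l, (Emap_strictMono p q).lt_iff_lt.1 hj1, ?_⟩
    rw [Phi_E, Phi_E] at hj2
    exact valF_lt.1 hj2
  · rintro ⟨l, hlk, hτ⟩
    constructor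
    · refine ⟨q, by rw [Fin.lt_def, hEv]; omega, ?_⟩
      rw [Phi_E, Phi_q]
      exact valF_lt_last _
    · exact ⟨Emap p q l, Emap_strictMono p q hlk,
        by rw [Phi_E, Phi_E]; exact valF_lt.2 hτ⟩

lemma cond_region2 (hpq : p < q) (τ : Equiv.Perm (Fin m)) (k : Fin m)
    (hk1 : p.val ≤ k.val) (hk2 : k.val + 1 < q.val) :
    1 ≤ quad1 (Phi p q hpq τ) (Emap p q k) ∧ 1 ≤ quad3 (Phi p q hpq τ) (Emap p q k) := by
  have hEv : (Emap p q k).val = k.val + 1 := by rw [Emap_val]; split_ifs <;> omega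
  constructor
  · rw [quad1_pos_iff]
    refine ⟨q, by rw [Fin.lt_def, hEv]; omega, ?_⟩
    rw [Phi_E, Phi_q]
    exact valF_lt_last _
  · rw [quad3_pos_iff]
    refine ⟨p, by rw [Fin.lt_def, hEv]; omega, ?_⟩
    rw [Phi_E, Phi_p]
    exact zero_lt_valF _

lemma cond_region3 (hpq : p < q) (τ : Equiv.Perm (Fin m)) (k : Fin m)
    (hk : q.val ≤ k.val + 1) :
    ((1 ≤ quad1 (Phi p q hpq τ) (Emap p q k) ∧ 1 ≤ quad3 (Phi p q hpq τ) (Emap p q k)) ↔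
      ∃ l, k < l ∧ τ k < τ l) := by
  have hpq' : p.val < q.val := hpq
  have hq := q.isLt
  have hEv : (Emap p q k).val = k.val + 2 := by rw [Emap_val]; split_ifs <;> omega
  rw [quad1_pos_iff, quad3_pos_iff]
  constructor
  · rintro ⟨⟨j, hj1, hj2⟩, -⟩
    have hjv : k.val + 2 < j.val := by have := Fin.lt_def.1 hj1; omega
    have hjp : j ≠ p := fun h => by have := congrArg Fin.val h; omega
    have hjq : j ≠ q := fun h => by have := congrArg Fin.val h; omega
    obtain ⟨l, rfl⟩ := Emap_surj p q hpq j hjp hjq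
    refine ⟨l, (Emap_strictMono p q).lt_iff_lt.1 hj1, ?_⟩
    rw [Phi_E, Phi_E] at hj2
    exact valF_lt.1 hj2
  · rintro ⟨l, hkl, hτ⟩
    refine ⟨⟨Emap p q l, Emap_strictMono p q hkl,
      by rw [Phi_E, Phi_E]; exact valF_lt.2 hτ⟩, p, ?_, ?_⟩
    · rw [Fin.lt_def, hEv]; omega
    · rw [Phi_E, Phi_p]
      exact zero_lt_valF _

lemma region_card (lo hi : ℕ) (hhi : hi ≤ m) :
    (Finset.univ.filter fun k : Fin m => lo ≤ k.val ∧ k.val < hi).card = hi - lo := by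
  rw [← Nat.card_Ico lo hi]
  apply Finset.card_nbij (i := Fin.val)
  · intro x hx
    simp only [Finset.mem_coe, Finset.mem_filter, Finset.mem_univ, true_and] at hx
    simp [Finset.mem_Ico, hx.1, hx.2]
  · intro x _ y _ h
    exact Fin.ext h
  · intro y hy
    rw [Finset.mem_coe, Finset.mem_Ico] at hy
    refine ⟨⟨y, by omega⟩, ?_, rfl⟩
    rw [Finset.mem_coe, Finset.mem_filter]
    exact ⟨Finset.mem_univ _, hy.1, hy.2⟩

lemma mmp_Phi (hpq : p < q) (τ : Equiv.Perm (Fin m)) :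
    mmp1010 (Phi p q hpq τ) =
      (q.val - p.val - 1) + (statA p.val τ + statB (q.val - 1) τ) := by
  have hpq' : p.val < q.val := hpq
  have hq := q.isLt
  set σ := Phi p q hpq τ with hσ
  unfold mmp1010
  rw [Finset.card_filter]
  rw [← Equiv.sum_comp (gpE p q hpq)
    (fun x => if 1 ≤ quad1 σ x ∧ 1 ≤ quad3 σ x then 1 else 0)]
  rw [Fintype.sum_sum_type, Fin.sum_univ_two]
  have hgp0 : gpE p q hpq (Sum.inr 0) = p := rfl
  have hgp1 : gpE p q hpq (Sum.inr 1) = q := rfl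
  have t0 : (if 1 ≤ quad1 σ (gpE p q hpq (Sum.inr 0)) ∧ 1 ≤ quad3 σ (gpE p q hpq (Sum.inr 0))
      then 1 else 0) = 0 := by
    rw [hgp0, if_neg]
    rintro ⟨-, h3⟩
    rw [quad3_pos_iff] at h3
    obtain ⟨j, -, hj⟩ := h3
    rw [hσ, Phi_p] at hj
    have := Fin.lt_def.1 hj
    simp at this
  have t1 : (if 1 ≤ quad1 σ (gpE p q hpq (Sum.inr 1)) ∧ 1 ≤ quad3 σ (gpE p q hpq (Sum.inr 1))
      then 1 else 0) = 0 := by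
    rw [hgp1, if_neg]
    rintro ⟨h1, -⟩
    rw [quad1_pos_iff] at h1
    obtain ⟨j, -, hj⟩ := h1
    rw [hσ, Phi_q] at hj
    have h2 := Fin.lt_def.1 hj
    have := j.isLt
    simp only [] at h2
    omega
  rw [t0, t1]
  have hsplit : ∀ k : Fin m,
      (if 1 ≤ quad1 σ (gpE p q hpq (Sum.inl k)) ∧ 1 ≤ quad3 σ (gpE p q hpq (Sum.inl k))
        then 1 else 0) =
      ((if k.val < p.val ∧ ∃ l, l < k ∧ τ l < τ k then 1 else 0) +
       (if p.val ≤ k.val ∧ k.val < q.val - 1 then 1 else 0) +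
       (if (q.val - 1 ≤ k.val) ∧ ∃ l, k < l ∧ τ k < τ l then 1 else 0)) := by
    intro k
    have hgpk : gpE p q hpq (Sum.inl k) = Emap p q k := rfl
    rw [hgpk]
    by_cases h1 : k.val < p.val
    · have e1 : (1 ≤ quad1 σ (Emap p q k) ∧ 1 ≤ quad3 σ (Emap p q k)) ↔
          (k.val < p.val ∧ ∃ l, l < k ∧ τ l < τ k) := by
        rw [hσ, cond_region1 p q hpq τ k h1]
        simp [h1]
      rw [if_congr e1 rfl rfl,
        if_neg (show ¬(p.val ≤ k.val ∧ k.val < q.val - 1) by rintro ⟨h, -⟩; omega),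
        if_neg (show ¬((q.val - 1 ≤ k.val) ∧ ∃ l, k < l ∧ τ k < τ l) by rintro ⟨h, -⟩; omega),
        add_zero, add_zero]
    · by_cases h2 : k.val < q.val - 1
      · have hc := cond_region2 p q hpq τ k (by omega) (by omega)
        rw [← hσ] at hc
        rw [if_pos hc,
          if_neg (show ¬(k.val < p.val ∧ ∃ l, l < k ∧ τ l < τ k) by rintro ⟨h, -⟩; omega),
          if_pos (show p.val ≤ k.val ∧ k.val < q.val - 1 from ⟨by omega, by omega⟩),
          if_neg (show ¬((q.val - 1 ≤ k.val) ∧ ∃ l, k < l ∧ τ k < τ l) by rintro ⟨h, -⟩; omega)]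
      · have e3 : (1 ≤ quad1 σ (Emap p q k) ∧ 1 ≤ quad3 σ (Emap p q k)) ↔
            ((q.val - 1 ≤ k.val) ∧ ∃ l, k < l ∧ τ k < τ l) := by
          rw [hσ, cond_region3 p q hpq τ k (by omega)]
          simp [show q.val - 1 ≤ k.val by omega]
        rw [if_congr e3 rfl rfl,
          if_neg (show ¬(k.val < p.val ∧ ∃ l, l < k ∧ τ l < τ k) by rintro ⟨h, -⟩; omega),
          if_neg (show ¬(p.val ≤ k.val ∧ k.val < q.val - 1) by rintro ⟨-, h⟩; omega),
          zero_add, zero_add]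
  rw [Finset.sum_congr rfl (fun k _ => hsplit k)]
  rw [Finset.sum_add_distrib, Finset.sum_add_distrib]
  rw [← Finset.card_filter, ← Finset.card_filter, ← Finset.card_filter]
  rw [region_card p.val (q.val - 1) (by omega)]
  have hA : (Finset.univ.filter fun k : Fin m =>
      k.val < p.val ∧ ∃ l, l < k ∧ τ l < τ k).card = statA p.val τ := rfl
  have hB : (Finset.univ.filter fun k : Fin m =>
      (q.val - 1 ≤ k.val) ∧ ∃ l, k < l ∧ τ k < τ l).card = statB (q.val - 1) τ := rfl
  rw [hA, hB]
  omega

lemma Phi_inj (hpq : p < q) : Function.Injective (Phi p q hpq) := by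
  intro τ τ' h
  apply Equiv.ext
  intro k
  have h1 : Phi p q hpq τ (Emap p q k) = Phi p q hpq τ' (Emap p q k) := by rw [h]
  rw [Phi_E, Phi_E] at h1
  have h2 := congrArg Fin.val h1
  dsimp only [valF] at h2
  exact Fin.ext (by omega)

lemma Phi_surj (hpq : p < q) (σ : Equiv.Perm (Fin (m + 2)))
    (h0 : σ p = ⟨0, by omega⟩) (h1 : σ q = ⟨m + 1, by omega⟩) :
    ∃ τ, Phi p q hpq τ = σ := by
  have hpq' : p.val < q.val := hpq
  have hne0 : ∀ k : Fin m, σ (Emap p q k) ≠ (⟨0, by omega⟩ : Fin (m + 2)) := by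
    intro k h
    exact Emap_ne_p p q hpq k (σ.injective (h.trans h0.symm))
  have hneL : ∀ k : Fin m, σ (Emap p q k) ≠ (⟨m + 1, by omega⟩ : Fin (m + 2)) := by
    intro k h
    exact Emap_ne_q p q hpq k (σ.injective (h.trans h1.symm))
  have hval : ∀ k : Fin m, 1 ≤ (σ (Emap p q k)).val ∧ (σ (Emap p q k)).val ≤ m := by
    intro k
    have hlt := (σ (Emap p q k)).isLt
    constructor
    · by_contra h
      exact hne0 k (Fin.ext (show (σ (Emap p q k)).val = 0 by omega))
    · by_contra h
      exact hneL k (Fin.ext (show (σ (Emap p q k)).val = m + 1 by omega))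
  set t : Fin m → Fin m := fun k =>
    ⟨(σ (Emap p q k)).val - 1, by have h := hval k; have := k.pos; omega⟩ with ht
  have tinj : Function.Injective t := by
    intro k k' h
    have hv := hval k
    have hv' := hval k'
    have hval2 : (σ (Emap p q k)).val = (σ (Emap p q k')).val := by
      have h3 := congrArg Fin.val h
      change (σ (Emap p q k)).val - 1 = (σ (Emap p q k')).val - 1 at h3
      omega
    exact (Emap_strictMono p q).injective (σ.injective (Fin.ext hval2))
  refine ⟨Equiv.ofBijective t (Finite.injective_iff_bijective.mp tinj), ?_⟩
  apply Equiv.ext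
  intro x
  obtain ⟨z, rfl⟩ := (gpE p q hpq).surjective x
  rcases z with k | v
  · have hx : gpE p q hpq (Sum.inl k) = Emap p q k := rfl
    rw [hx, Phi_E]
    have hτ : Equiv.ofBijective t (Finite.injective_iff_bijective.mp tinj) k = t k := rfl
    rw [hτ]
    apply Fin.ext
    dsimp only [valF, ht]
    have := hval k
    have ht' : (t k).val = (σ (Emap p q k)).val - 1 := rfl
    omega
  · have h2 : v = 0 ∨ v = 1 := by
      rcases v with ⟨(_ | _ | vv), hvv⟩
      · exact Or.inl rfl
      · exact Or.inr rfl
      · omega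
    rcases h2 with rfl | rfl
    · have hx : gpE p q hpq (Sum.inr 0) = p := rfl
      rw [hx, Phi_p]
      exact h0.symm
    · have hx : gpE p q hpq (Sum.inr 1) = q := rfl
      rw [hx, Phi_q]
      exact h1.symm

lemma pair_sum (hpq : p < q) :
    (∑ σ ∈ Finset.univ.filter (fun σ : Equiv.Perm (Fin (m + 2)) =>
        σ.symm ⟨0, by omega⟩ = p ∧ σ.symm ⟨m + 1, by omega⟩ = q),
      (X : Polynomial ℤ) ^ mmp1010 σ) =
    ∑ τ : Equiv.Perm (Fin m),
      (X : Polynomial ℤ) ^ ((q.val - p.val - 1) + (statA p.val τ + statB (q.val - 1) τ)) := by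
  symm
  apply Finset.sum_nbij (i := Phi p q hpq)
  · intro τ _
    simp only [Finset.mem_filter, Finset.mem_univ, true_and]
    constructor
    · rw [Equiv.symm_apply_eq]
      exact (Phi_p p q hpq τ).symm
    · rw [Equiv.symm_apply_eq]
      exact (Phi_q p q hpq τ).symm
  · intro x _ y _ h
    exact Phi_inj p q hpq h
  · intro σ hσ
    simp only [Finset.coe_filter, Set.mem_setOf_eq, Finset.mem_univ, true_and] at hσ
    obtain ⟨h0, h1⟩ := hσ
    obtain ⟨τ, hτ⟩ := Phi_surj p q hpq σ (by rw [← h0]; simp) (by rw [← h1]; simp)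
    exact ⟨τ, by simp, hτ⟩
  · intro τ _
    rw [mmp_Phi p q hpq τ]

end Outer

lemma coeff_eq (a b c : ℕ) :
    Nat.factorial (a + b + c) / (Nat.factorial a * Nat.factorial b * Nat.factorial c) *
      Nat.factorial b = Nat.factorial (a + b + c) / (Nat.factorial a * Nat.factorial c) := by
  obtain ⟨t, ht⟩ : Nat.factorial a * Nat.factorial b * Nat.factorial c ∣
      Nat.factorial (a + b + c) := by
    have h1 : Nat.factorial b * Nat.factorial c ∣ Nat.factorial (b + c) :=
      Nat.factorial_mul_factorial_dvd_factorial_add b c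
    have h2 : Nat.factorial a * Nat.factorial (b + c) ∣ Nat.factorial (a + (b + c)) :=
      Nat.factorial_mul_factorial_dvd_factorial_add a (b + c)
    calc Nat.factorial a * Nat.factorial b * Nat.factorial c
        = Nat.factorial a * (Nat.factorial b * Nat.factorial c) := by ring
      _ ∣ Nat.factorial a * Nat.factorial (b + c) := Nat.mul_dvd_mul_left _ h1
      _ ∣ Nat.factorial (a + (b + c)) := h2
      _ = Nat.factorial (a + b + c) := by rw [add_assoc]
  have hpos1 : 0 < Nat.factorial a * Nat.factorial b * Nat.factorial c :=
    Nat.mul_pos (Nat.mul_pos (Nat.factorial_pos a) (Nat.factorial_pos b)) (Nat.factorial_pos c)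
  have hpos2 : 0 < Nat.factorial a * Nat.factorial c :=
    Nat.mul_pos (Nat.factorial_pos a) (Nat.factorial_pos c)
  rw [ht, Nat.mul_div_cancel_left _ hpos1]
  have h4 : Nat.factorial a * Nat.factorial b * Nat.factorial c * t =
      Nat.factorial a * Nat.factorial c * (t * Nat.factorial b) := by ring
  rw [h4, Nat.mul_div_cancel_left _ hpos2]

end Aux

namespace Aux

lemma pair_term (m i j : ℕ) (h1 : 1 ≤ i) (hij : i < j) (h2 : j ≤ m + 2) :
    (∑ σ ∈ Finset.univ.filter (fun σ : Equiv.Perm (Fin (m + 2)) =>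
        σ.symm ⟨0, by omega⟩ = ⟨i - 1, by omega⟩ ∧
        σ.symm ⟨m + 1, by omega⟩ = ⟨j - 1, by omega⟩),
      (X : Polynomial ℤ) ^ mmp1010 σ) =
    ((Nat.factorial m /
        (Nat.factorial (i - 1) * Nat.factorial (j - i - 1) * Nat.factorial (m + 2 - j)) *
        Nat.factorial (j - i - 1) : ℕ) : Polynomial ℤ) *
      X ^ (j - i - 1) * R0010 (i - 1) * R1000 (m + 2 - j) := by
  have hpq : (⟨i - 1, by omega⟩ : Fin (m + 2)) < ⟨j - 1, by omega⟩ := by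
    rw [Fin.lt_def]
    dsimp only
    omega
  rw [pair_sum ⟨i - 1, by omega⟩ ⟨j - 1, by omega⟩ hpq]
  have hexp : ∀ τ : Equiv.Perm (Fin m),
      (((⟨j - 1, by omega⟩ : Fin (m + 2)).val - (⟨i - 1, by omega⟩ : Fin (m + 2)).val - 1) +
        (statA (⟨i - 1, by omega⟩ : Fin (m + 2)).val τ +
         statB ((⟨j - 1, by omega⟩ : Fin (m + 2)).val - 1) τ)) =
      (j - i - 1) + (statA (i - 1) τ + statB (m - (m + 2 - j)) τ) := by
    intro τ
    have hv1 : (⟨i - 1, by omega⟩ : Fin (m + 2)).val = i - 1 := rfl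
    have hv2 : (⟨j - 1, by omega⟩ : Fin (m + 2)).val = j - 1 := rfl
    rw [hv1, hv2]
    have hB : j - 1 - 1 = m - (m + 2 - j) := by omega
    rw [hB]
    congr 1
    omega
  rw [Finset.sum_congr rfl (fun τ _ => by rw [hexp τ, pow_add])]
  rw [← Finset.mul_sum]
  rw [core_sum (show (i - 1) + (m + 2 - j) ≤ m by omega)]
  have hm : (i - 1) + (j - i - 1) + (m + 2 - j) = m := by omega
  have hco := coeff_eq (i - 1) (j - i - 1) (m + 2 - j)
  rw [hm] at hco
  rw [hco, nsmul_eq_mul]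
  ring

end Aux

open Aux in
theorem stmt_17 (n : ℕ) (hn : 2 ≤ n) :
    (∑ σ ∈ Finset.univ.filter (fun σ : Equiv.Perm (Fin n) =>
        σ.symm ⟨0, by omega⟩ < σ.symm ⟨n - 1, by omega⟩),
      (Polynomial.X : Polynomial ℤ) ^ mmp1010 σ) =
    ∑ i ∈ Finset.Icc 1 n, ∑ j ∈ Finset.Icc (i + 1) n,
      ((Nat.factorial (n - 2) /
          (Nat.factorial (i - 1) * Nat.factorial (j - i - 1) * Nat.factorial (n - j)) *
          Nat.factorial (j - i - 1) : ℕ) : Polynomial ℤ) *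
        Polynomial.X ^ (j - i - 1) * R0010 (i - 1) * R1000 (n - j) := by
  obtain ⟨m, rfl⟩ : ∃ m, n = m + 2 := ⟨n - 2, by omega⟩
  have hL : (⟨m + 2 - 1, by omega⟩ : Fin (m + 2)) = ⟨m + 1, by omega⟩ :=
    Fin.ext (show m + 2 - 1 = m + 1 by omega)
  simp only [hL, Nat.add_sub_cancel]
  have hmaps1 : ∀ σ ∈ Finset.univ.filter (fun σ : Equiv.Perm (Fin (m + 2)) =>
      σ.symm ⟨0, by omega⟩ < σ.symm ⟨m + 1, by omega⟩),
      (σ.symm ⟨0, by omega⟩).val + 1 ∈ Finset.Icc 1 (m + 2) := by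
    intro σ _
    have := (σ.symm (⟨0, by omega⟩ : Fin (m + 2))).isLt
    rw [Finset.mem_Icc]
    omega
  rw [← Finset.sum_fiberwise_of_maps_to hmaps1 (fun σ => (X : Polynomial ℤ) ^ mmp1010 σ)]
  apply Finset.sum_congr rfl
  intro i hi
  rw [Finset.mem_Icc] at hi
  have hmaps2 : ∀ σ ∈ (Finset.univ.filter (fun σ : Equiv.Perm (Fin (m + 2)) =>
      σ.symm ⟨0, by omega⟩ < σ.symm ⟨m + 1, by omega⟩)).filter
        (fun σ => (σ.symm ⟨0, by omega⟩).val + 1 = i),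
      (σ.symm ⟨m + 1, by omega⟩).val + 1 ∈ Finset.Icc (i + 1) (m + 2) := by
    intro σ hσ
    simp only [Finset.mem_filter, Finset.mem_univ, true_and] at hσ
    obtain ⟨hlt, hkey⟩ := hσ
    have hqlt := (σ.symm (⟨m + 1, by omega⟩ : Fin (m + 2))).isLt
    have hlt' : (σ.symm (⟨0, by omega⟩ : Fin (m + 2))).val <
        (σ.symm (⟨m + 1, by omega⟩ : Fin (m + 2))).val := hlt
    rw [Finset.mem_Icc]
    omega
  rw [← Finset.sum_fiberwise_of_maps_to hmaps2 (fun σ => (X : Polynomial ℤ) ^ mmp1010 σ)]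
  apply Finset.sum_congr rfl
  intro j hj
  rw [Finset.mem_Icc] at hj
  rw [Finset.filter_filter]
  have hfib : (Finset.univ.filter (fun σ : Equiv.Perm (Fin (m + 2)) =>
      σ.symm ⟨0, by omega⟩ < σ.symm ⟨m + 1, by omega⟩)).filter
        (fun σ => ((σ.symm ⟨0, by omega⟩).val + 1 = i ∧ (σ.symm ⟨m + 1, by omega⟩).val + 1 = j)) =
      Finset.univ.filter (fun σ : Equiv.Perm (Fin (m + 2)) =>
        σ.symm ⟨0, by omega⟩ = ⟨i - 1, by omega⟩ ∧
        σ.symm ⟨m + 1, by omega⟩ = ⟨j - 1, by omega⟩) := by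
    rw [Finset.filter_filter]
    apply Finset.filter_congr
    intro σ _
    constructor
    · rintro ⟨hlt, he1, he2⟩
      exact ⟨Fin.ext (show (σ.symm ⟨0, by omega⟩ : Fin (m + 2)).val = i - 1 by omega),
        Fin.ext (show (σ.symm ⟨m + 1, by omega⟩ : Fin (m + 2)).val = j - 1 by omega)⟩
    · rintro ⟨ha, hb⟩
      have hva := congrArg Fin.val ha
      have hvb := congrArg Fin.val hb
      dsimp only at hva hvb
      refine ⟨?_, by omega, by omega⟩
      rw [Fin.lt_def]
      omega
  rw [hfib, pair_term m i j (by omega) (by omega) (by omega)]
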